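/- Let φ : A → B be a unital completely positive map between unital C*-algebras. Then the multiplicative domain m(φ) = {a ∈ A : φ(a*a) = φ(a)*φ(a) and φ(aa*) = φ(a)φ(a)*} is a C*-subalgebra of A, and the restriction of φ to m(φ) is a unital *-homomorphism. -/

import Mathlib

def IsUCP {A B : Type*} [Ring A] [StarRing A] [Algebra ℂ A]
    [Ring B] [StarRing B] [Algebra ℂ B] (φ : A →ₗ[ℂ] B) : Prop :=
  φ 1 = 1 ∧ ∀ (k : ℕ) (a : Matrix (Fin k) (Fin k) A),
    (∃ b : Matrix (Fin k) (Fin k) A, a = star b * b) →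
    ∃ c : Matrix (Fin k) (Fin k) B, a.map φ = star c * c

section ChoiAux

variable {A B : Type*} [CStarAlgebra A] [CStarAlgebra B]

lemma choi_entries (φ : A →ₗ[ℂ] B) (hφ : IsUCP φ) (a : A) :
    ∃ c : Matrix (Fin 2) (Fin 2) B,
      (star c * c) 0 0 = 1 ∧ (star c * c) 0 1 = φ a ∧
      (star c * c) 1 0 = φ (star a) ∧ (star c * c) 1 1 = φ (star a * a) := by
  obtain ⟨c, hc⟩ := hφ.2 2 (star (!![1, a; 0, 0]) * !![1, a; 0, 0]) ⟨_, rfl⟩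
  refine ⟨c, ?_, ?_, ?_, ?_⟩ <;>
  · rw [← hc]
    simp [Matrix.map_apply, Matrix.mul_apply, Fin.sum_univ_two,
      Matrix.conjTranspose_apply, hφ.1]

lemma choi_star_map (φ : A →ₗ[ℂ] B) (hφ : IsUCP φ) (a : A) :
    φ (star a) = star (φ a) := by
  obtain ⟨c, h00, h01, h10, h11⟩ := choi_entries φ hφ a
  have h : star (star c * c) = star c * c := by rw [StarMul.star_mul, star_star]
  rw [← h10, ← h01]
  conv_lhs => rw [← h]
  simp [Matrix.star_apply]

variable [PartialOrder B] [StarOrderedRing B]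

lemma choi_schwarz (φ : A →ₗ[ℂ] B) (hφ : IsUCP φ) (a : A) :
    0 ≤ φ (star a * a) - star (φ a) * φ a := by
  obtain ⟨c, h00, h01, h10, h11⟩ := choi_entries φ hφ a
  have hst := choi_star_map φ hφ a
  set u : Matrix (Fin 2) (Fin 2) B := !![-(φ a), 0; 1, 0] with hu
  have hassoc : star (c * u) * (c * u) = star u * ((star c * c) * u) := by
    rw [StarMul.star_mul]
    noncomm_ring
  have key : φ (star a * a) - star (φ a) * φ a = (star (c * u) * (c * u)) 0 0 := by
    rw [hassoc]
    set P := star c * c with hP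
    simp only [Matrix.mul_apply, Fin.sum_univ_two, Matrix.conjTranspose_apply]
    rw [h00, h01, h10, h11, hst]
    simp [hu]
    noncomm_ring
  have key2 : (star (c * u) * (c * u)) 0 0
      = ∑ k : Fin 2, star ((c * u) k 0) * ((c * u) k 0) := by
    simp [Matrix.mul_apply, Matrix.conjTranspose_apply]
  rw [key, key2]
  exact Finset.sum_nonneg fun i _ => star_mul_self_nonneg _

lemma choi_rsmul_nonneg {x : B} (hx : 0 ≤ x) {r : ℝ} (hr : 0 ≤ r) : 0 ≤ r • x := by
  have h1 : x = CFC.sqrt x * CFC.sqrt x := (CFC.sqrt_mul_sqrt_self x hx).symm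
  have h2 : star (CFC.sqrt x) = CFC.sqrt x := (IsSelfAdjoint.of_nonneg (CFC.sqrt_nonneg x)).star_eq
  have : r • x = star (Real.sqrt r • CFC.sqrt x) * (Real.sqrt r • CFC.sqrt x) := by
    rw [star_smul, h2, smul_mul_smul_comm, star_trivial, Real.mul_self_sqrt hr, ← h1]
  rw [this]
  exact star_mul_self_nonneg _

lemma choi_eq_zero_of_forall (p q : B)
    (h : ∀ t : ℝ, 0 ≤ p + t • q) : q = 0 := by
  have tends : Filter.Tendsto (fun n : ℕ => (1 / ((n : ℝ) + 1)) • p) Filter.atTop (nhds 0) := by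
    simpa using (tendsto_one_div_add_atTop_nhds_zero_nat (𝕜 := ℝ)).smul_const p
  have h1 : 0 ≤ q := by
    have hb : ∀ n : ℕ, -((1 / ((n : ℝ) + 1)) • p) ≤ q := by
      intro n
      rw [neg_le_iff_add_nonneg]
      have := choi_rsmul_nonneg (h ((n : ℝ) + 1)) (r := 1 / ((n : ℝ) + 1)) (by positivity)
      rw [smul_add, smul_smul, one_div_mul_cancel (by positivity), one_smul] at this
      rwa [add_comm] at this
    exact le_of_tendsto' (by simpa using tends.neg) hb
  have h2 : q ≤ 0 := by
    have hb : ∀ n : ℕ, q ≤ (1 / ((n : ℝ) + 1)) • p := by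
      intro n
      rw [← sub_nonneg]
      have := choi_rsmul_nonneg (h (-((n : ℝ) + 1))) (r := 1 / ((n : ℝ) + 1)) (by positivity)
      rw [smul_add, smul_smul, mul_neg, one_div_mul_cancel (by positivity), neg_smul,
        one_smul, ← sub_eq_add_neg] at this
      exact this
    exact ge_of_tendsto' tends hb
  exact le_antisymm h2 h1

lemma choi_mult_right (φ : A →ₗ[ℂ] B) (hφ : IsUCP φ) {a : A}
    (ha : φ (star a * a) = star (φ a) * φ a) (b : A) :
    φ (star b * a) = star (φ b) * φ a := by
  have hst : ∀ x : A, φ (star x) = star (φ x) := choi_star_map φ hφ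
  have hstep : ∀ b : A, (φ (star b * a) - star (φ b) * φ a)
      + star (φ (star b * a) - star (φ b) * φ a) = 0 := by
    intro b
    apply choi_eq_zero_of_forall (φ (star b * b) - star (φ b) * φ b)
    intro t
    have h2 := choi_schwarz φ hφ (b + (t : ℂ) • a)
    have e1 : star (φ (star b * a)) = φ (star a * b) := by
      rw [← hst, star_mul, star_star]
    have expand : φ (star (b + (t:ℂ) • a) * (b + (t:ℂ) • a))
        - star (φ (b + (t:ℂ) • a)) * φ (b + (t:ℂ) • a)
        = (φ (star b * b) - star (φ b) * φ b)
          + t • ((φ (star b * a) - star (φ b) * φ a)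
            + star (φ (star b * a) - star (φ b) * φ a)) := by
      simp only [star_add, star_smul, map_add, map_smul, add_mul, mul_add,
        smul_mul_assoc, mul_smul_comm, star_sub, star_mul, star_star,
        Complex.star_def, Complex.conj_ofReal, e1, ha, ← Complex.coe_smul]
      module
    rw [← expand]
    exact h2
  set X := φ (star b * a) - star (φ b) * φ a with hX
  have h1 := hstep b
  have h2 := hstep (Complex.I • b)
  have hs : star X = -X := eq_neg_of_add_eq_zero_left (by rwa [add_comm] at h1)
  have hIb : φ (star (Complex.I • b) * a) - star (φ (Complex.I • b)) * φ a
      = (-Complex.I) • X := by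
    simp only [hX, star_smul, Complex.star_def, Complex.conj_I, map_smul,
      smul_mul_assoc, neg_smul, neg_mul, smul_sub]
    simp
  rw [hIb] at h2
  have h2' : (-(2 * Complex.I)) • X = 0 := by
    rw [star_smul, hs, Complex.star_def] at h2
    simp only [map_neg, Complex.conj_I, smul_neg, neg_neg, neg_smul] at h2
    rw [show (-(2 * Complex.I)) • X = -Complex.I • X + -(Complex.I • X) by module]
    rw [← neg_smul] at h2 ⊢
    convert h2 using 2
  have hXz : X = 0 := by
    rcases smul_eq_zero.mp h2' with h | h
    · exact absurd h (by simp [Complex.I_ne_zero])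
    · exact h
  exact sub_eq_zero.mp hXz

variable [PartialOrder A] [StarOrderedRing A]

lemma choi_mono (φ : A →ₗ[ℂ] B) (hφ : IsUCP φ) {x y : A} (h : x ≤ y) : φ x ≤ φ y := by
  have hd : 0 ≤ y - x := sub_nonneg.mpr h
  set s := CFC.sqrt (y - x) with hs
  have h1 : y - x = star s * s := by
    rw [hs, (IsSelfAdjoint.of_nonneg (CFC.sqrt_nonneg _)).star_eq, CFC.sqrt_mul_sqrt_self _ hd]
  have h2 : 0 ≤ φ (y - x) := by
    rw [h1]
    calc (0 : B) ≤ star (φ s) * φ s := star_mul_self_nonneg _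
    _ ≤ φ (star s * s) := by
        have := choi_schwarz φ hφ s
        rw [sub_nonneg] at this
        exact this
  rw [map_sub, sub_nonneg] at h2
  exact h2

lemma choi_norm_le (φ : A →ₗ[ℂ] B) (hφ : IsUCP φ) [Nontrivial B] (a : A) : ‖φ a‖ ≤ ‖a‖ := by
  have hpos : ∀ x : A, 0 ≤ x → ‖φ x‖ ≤ ‖x‖ := by
    intro x hx
    have h1 : x ≤ algebraMap ℝ A ‖x‖ :=
      IsSelfAdjoint.le_algebraMap_norm_self (IsSelfAdjoint.of_nonneg hx)
    have h3 : φ (algebraMap ℝ A ‖x‖) = algebraMap ℝ B ‖x‖ := by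
      rw [Algebra.algebraMap_eq_smul_one, Algebra.algebraMap_eq_smul_one,
        ← Complex.coe_smul, ← Complex.coe_smul, map_smul, hφ.1]
    have h2 : φ x ≤ algebraMap ℝ B ‖x‖ := h3 ▸ choi_mono φ hφ h1
    have h0 : 0 ≤ φ x := by simpa [map_zero] using choi_mono φ hφ hx
    calc ‖φ x‖ ≤ ‖algebraMap ℝ B ‖x‖‖ := CStarAlgebra.norm_le_norm_of_nonneg_of_le h0 h2
    _ = ‖x‖ := by rw [norm_algebraMap', Real.norm_of_nonneg (norm_nonneg x)]
  have e : ‖φ a‖ * ‖φ a‖ ≤ ‖a‖ * ‖a‖ := by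
    calc ‖φ a‖ * ‖φ a‖ = ‖star (φ a) * φ a‖ := (CStarRing.norm_star_mul_self).symm
    _ ≤ ‖φ (star a * a)‖ := by
        refine CStarAlgebra.norm_le_norm_of_nonneg_of_le (star_mul_self_nonneg _) ?_
        have := choi_schwarz φ hφ a
        rw [sub_nonneg] at this
        exact this
    _ ≤ ‖star a * a‖ := hpos _ (star_mul_self_nonneg a)
    _ = ‖a‖ * ‖a‖ := CStarRing.norm_star_mul_self
  nlinarith [norm_nonneg (φ a), norm_nonneg a, e]

lemma choi_continuous (φ : A →ₗ[ℂ] B) (hφ : IsUCP φ) : Continuous φ := by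
  rcases subsingleton_or_nontrivial B with hB | hB
  · exact continuous_of_const fun _ _ => Subsingleton.elim _ _
  · exact AddMonoidHomClass.continuous_of_bound φ 1 fun x => by
      simpa using choi_norm_le φ hφ x

end ChoiAux

/-- Choi's multiplicative domain theorem: the multiplicative domain of a ucp map is a
C*-subalgebra (a topologically closed, star-closed subalgebra), and the restriction of the
map to it is a unital *-homomorphism. -/
theorem multiplicative_domain_is_cstar_subalgebra_and_hom
    {A B : Type*} [CStarAlgebra A] [CStarAlgebra B]
    (φ : A →ₗ[ℂ] B) (hφ : IsUCP φ) :
    letI M : Set A := {a : A | φ (star a * a) = star (φ a) * φ a ∧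
      φ (a * star a) = φ a * star (φ a)}
    (1 : A) ∈ M ∧
    (∀ a ∈ M, ∀ b ∈ M, a + b ∈ M) ∧
    (∀ (c : ℂ), ∀ a ∈ M, c • a ∈ M) ∧
    (∀ a ∈ M, ∀ b ∈ M, a * b ∈ M) ∧
    (∀ a ∈ M, star a ∈ M) ∧
    IsClosed M ∧
    φ 1 = 1 ∧
    (∀ a ∈ M, ∀ b ∈ M, φ (a * b) = φ a * φ b) ∧
    (∀ a ∈ M, φ (star a) = star (φ a)) := by
  letI : PartialOrder A := CStarAlgebra.spectralOrder A
  letI : StarOrderedRing A := CStarAlgebra.spectralOrderedRing A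
  letI : PartialOrder B := CStarAlgebra.spectralOrder B
  letI : StarOrderedRing B := CStarAlgebra.spectralOrderedRing B
  have hst : ∀ x : A, φ (star x) = star (φ x) := choi_star_map φ hφ
  have hmulR : ∀ {a : A}, φ (star a * a) = star (φ a) * φ a →
      ∀ c : A, φ (c * a) = φ c * φ a := by
    intro a ha c
    have := choi_mult_right φ hφ ha (star c)
    rwa [star_star, hst, star_star] at this
  have hmulL : ∀ {a : A}, φ (a * star a) = φ a * star (φ a) →
      ∀ c : A, φ (a * c) = φ a * φ c := by
    intro a ha c
    have ha' : φ (star (star a) * star a) = star (φ (star a)) * φ (star a) := by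
      rw [star_star, hst, star_star]
      exact ha
    have h := choi_mult_right φ hφ ha' c
    have key : star (star c * star a) = a * c := by rw [star_mul, star_star, star_star]
    calc φ (a * c) = φ (star (star c * star a)) := by rw [key]
    _ = star (φ (star c * star a)) := hst _
    _ = star (star (φ c) * φ (star a)) := by rw [h]
    _ = star (φ (star a)) * star (star (φ c)) := by rw [star_mul]
    _ = φ a * φ c := by rw [star_star, hst, star_star]
  have hback : ∀ a : A, (∀ c, φ (c * a) = φ c * φ a) → (∀ c, φ (a * c) = φ a * φ c) →
      (φ (star a * a) = star (φ a) * φ a ∧ φ (a * star a) = φ a * star (φ a)) := by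
    intro a h1 h2
    exact ⟨by rw [h1 (star a), hst], by rw [h2 (star a), hst]⟩
  refine ⟨⟨by simp [hφ.1], by simp [hφ.1]⟩, ?_, ?_, ?_, ?_, ?_, hφ.1, ?_, fun a _ => hst a⟩
  · -- add
    intro a ha b hb
    exact hback _
      (fun c => by rw [mul_add, map_add, map_add, hmulR ha.1 c, hmulR hb.1 c, mul_add])
      (fun c => by rw [add_mul, map_add, map_add, hmulL ha.2 c, hmulL hb.2 c, add_mul])
  · -- smul
    intro s a ha
    exact hback _
      (fun c => by rw [mul_smul_comm, map_smul, map_smul, hmulR ha.1 c, mul_smul_comm])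
      (fun c => by rw [smul_mul_assoc, map_smul, map_smul, hmulL ha.2 c, smul_mul_assoc])
  · -- mul
    intro a ha b hb
    exact hback _
      (fun c => by
        rw [← mul_assoc, hmulR hb.1 (c * a), hmulR ha.1 c, hmulL ha.2 b, mul_assoc])
      (fun c => by
        rw [mul_assoc, hmulL ha.2 (b * c), hmulL hb.2 c, hmulL ha.2 b, mul_assoc])
  · -- star
    intro a ha
    constructor
    · rw [star_star, hst, star_star]
      exact ha.2
    · rw [star_star, hst, star_star]
      exact ha.1
  · -- closed
    have hc : Continuous φ := choi_continuous φ hφ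
    have : {a : A | φ (star a * a) = star (φ a) * φ a ∧
        φ (a * star a) = φ a * star (φ a)}
        = {a : A | φ (star a * a) = star (φ a) * φ a} ∩
          {a : A | φ (a * star a) = φ a * star (φ a)} := rfl
    rw [this]
    refine IsClosed.inter (isClosed_eq ?_ ?_) (isClosed_eq ?_ ?_)
    · exact hc.comp (continuous_star.mul continuous_id)
    · exact (continuous_star.comp hc).mul hc
    · exact hc.comp (continuous_id.mul continuous_star)
    · exact hc.mul (continuous_star.comp hc)
  · -- multiplicative
    intro a ha b hb
    exact hmulL ha.2 b
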